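/- If G is a graph whose largest matching has size at least 4, then the number of matchings of size 2 in G is strictly greater than the number of matchings of size 1 (i.e., the number of edges). -/

import Mathlib

/-- `M` is a matching of `G`, viewed as a finite set of edges of `G` that are
pairwise vertex-disjoint. -/
def IsMatchingFinset {V : Type*} (G : SimpleGraph V) (M : Finset (Sym2 V)) : Prop :=
  (↑M : Set (Sym2 V)) ⊆ G.edgeSet ∧
    (↑M : Set (Sym2 V)).Pairwise (fun e f => ∀ x, x ∈ e → x ∉ f)

/-- The number of matchings of size `k` in `G`. -/
noncomputable def matchCount {V : Type*} (G : SimpleGraph V) (k : ℕ) : ℕ :=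
  {M : Finset (Sym2 V) | IsMatchingFinset G M ∧ M.card = k}.ncard

private lemma disj_symm' {V : Type*} {e f : Sym2 V} (h : ∀ x, x ∈ e → x ∉ f) :
    ∀ x, x ∈ f → x ∉ e := fun x hf he => h x he hf

private lemma disj_ne' {V : Type*} {e f : Sym2 V} (h : ∀ x, x ∈ e → x ∉ f) : e ≠ f := by
  induction e using Sym2.ind with
  | _ a b =>
    intro hef
    exact h a (by simp) (hef ▸ (by simp : a ∈ s(a, b)))

private lemma disj_third' {V : Type*} {f a b c : Sym2 V}
    (hab : ∀ x, x ∈ a → x ∉ b) (hac : ∀ x, x ∈ a → x ∉ c) (hbc : ∀ x, x ∈ b → x ∉ c)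
    (h0 : ¬ ∀ x, x ∈ f → x ∉ a) (h1 : ¬ ∀ x, x ∈ f → x ∉ b) :
    ∀ x, x ∈ f → x ∉ c := by
  push_neg at h0 h1
  obtain ⟨x, hxf, hxa⟩ := h0
  obtain ⟨y, hyf, hyb⟩ := h1
  induction f using Sym2.ind with
  | _ u v =>
    intro z hzf hzc
    rw [Sym2.mem_iff] at hxf hyf hzf
    have hxy : x ≠ y := fun h => hab x hxa (h ▸ hyb)
    have hz : z = x ∨ z = y := by
      rcases hzf with rfl | rfl <;> rcases hxf with h1 | h1 <;> rcases hyf with h2 | h2 <;>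
        first
          | tauto
          | exact absurd (h1.trans h2.symm) hxy
    rcases hz with rfl | rfl
    · exact hac z hxa hzc
    · exact hbc z hyb hzc

theorem stmt_13 {V : Type*} [Fintype V] (G : SimpleGraph V)
    (hν : ∃ M : Finset (Sym2 V), IsMatchingFinset G M ∧ 4 ≤ M.card) :
    matchCount G 1 < matchCount G 2 := by
  classical
  obtain ⟨M, hM, hcard⟩ := hν
  -- extract four distinct edges of the matching
  obtain ⟨e0, he0⟩ := Finset.card_pos.mp (show 0 < M.card by omega)
  have hc1 : 0 < (M.erase e0).card := by
    rw [Finset.card_erase_of_mem he0]; omega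
  obtain ⟨e1, he1⟩ := Finset.card_pos.mp hc1
  have hc2 : 0 < ((M.erase e0).erase e1).card := by
    rw [Finset.card_erase_of_mem he1, Finset.card_erase_of_mem he0]; omega
  obtain ⟨e2, he2⟩ := Finset.card_pos.mp hc2
  have hc3 : 0 < (((M.erase e0).erase e1).erase e2).card := by
    rw [Finset.card_erase_of_mem he2, Finset.card_erase_of_mem he1,
      Finset.card_erase_of_mem he0]; omega
  obtain ⟨e3, he3⟩ := Finset.card_pos.mp hc3
  simp only [Finset.mem_erase] at he1 he2 he3
  have h1M : e1 ∈ M := he1.2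
  have h2M : e2 ∈ M := he2.2.2
  have h3M : e3 ∈ M := he3.2.2.2
  have h10 : e1 ≠ e0 := he1.1
  have h20 : e2 ≠ e0 := he2.2.1
  have h21 : e2 ≠ e1 := he2.1
  have h30 : e3 ≠ e0 := he3.2.2.1
  have h31 : e3 ≠ e1 := he3.2.1
  have h32 : e3 ≠ e2 := he3.1
  have hpw := hM.2
  have d01 : ∀ x, x ∈ e0 → x ∉ e1 := hpw he0 h1M (Ne.symm h10)
  have d02 : ∀ x, x ∈ e0 → x ∉ e2 := hpw he0 h2M (Ne.symm h20)
  have d03 : ∀ x, x ∈ e0 → x ∉ e3 := hpw he0 h3M (Ne.symm h30)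
  have d12 : ∀ x, x ∈ e1 → x ∉ e2 := hpw h1M h2M (Ne.symm h21)
  have d23 : ∀ x, x ∈ e2 → x ∉ e3 := hpw h2M h3M (Ne.symm h32)
  have d30 : ∀ x, x ∈ e3 → x ∉ e0 := hpw h3M he0 h30
  -- the "partner" function
  set part : Sym2 V → Sym2 V := fun f =>
    if f = e0 then e1 else if f = e1 then e2 else if f = e2 then e3 else if f = e3 then e0
    else if ∀ x, x ∈ f → x ∉ e0 then e0 else if ∀ x, x ∈ f → x ∉ e1 then e1 else e2
    with hpartdef
  have hpart_mem : ∀ f, part f = e0 ∨ part f = e1 ∨ part f = e2 ∨ part f = e3 := by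
    intro f
    simp only [hpartdef]
    split_ifs <;> tauto
  have hpart_disj : ∀ f, ∀ x, x ∈ f → x ∉ part f := by
    intro f
    simp only [hpartdef]
    split_ifs with hf0 hf1 hf2 hf3 hd0 hd1
    · exact hf0 ▸ d01
    · exact hf1 ▸ d12
    · exact hf2 ▸ d23
    · exact hf3 ▸ disj_symm' d03
    · exact hd0
    · exact hd1
    · exact disj_third' d01 d02 d12 hd0 hd1
  have hp0 : part e0 = e1 := by simp only [hpartdef]; simp
  have hp1 : part e1 = e2 := by simp only [hpartdef]; simp [h10]
  have hp2 : part e2 = e3 := by simp only [hpartdef]; simp [h20, h21]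
  have hp3 : part e3 = e0 := by simp only [hpartdef]; simp [h30, h31, h32]
  have hpart_edge : ∀ f, part f ∈ G.edgeSet := by
    intro f
    rcases hpart_mem f with h | h | h | h <;> rw [h] <;> exact hM.1 (by simpa)
  have hpart_ne : ∀ f, part f ≠ f := fun f => (disj_ne' (hpart_disj f)).symm
  -- sets and the map
  set S1 : Set (Finset (Sym2 V)) := {N | IsMatchingFinset G N ∧ N.card = 1} with hS1
  set S2 : Set (Finset (Sym2 V)) := {N | IsMatchingFinset G N ∧ N.card = 2} with hS2
  set t : Finset (Sym2 V) := {e0, e2} with htdef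
  have ht2 : t ∈ S2 := by
    refine ⟨⟨?_, ?_⟩, ?_⟩
    · intro e he
      simp only [htdef, Finset.coe_insert, Finset.coe_singleton, Set.mem_insert_iff,
        Set.mem_singleton_iff] at he
      rcases he with rfl | rfl
      · exact hM.1 (by simpa)
      · exact hM.1 (by simpa)
    · intro x hx y hy hxy
      simp only [htdef, Finset.coe_insert, Finset.coe_singleton, Set.mem_insert_iff,
        Set.mem_singleton_iff] at hx hy
      rcases hx with rfl | rfl <;> rcases hy with rfl | rfl
      · exact absurd rfl hxy
      · exact d02
      · exact disj_symm' d02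
      · exact absurd rfl hxy
    · rw [htdef, Finset.card_insert_of_notMem (by simp [Ne.symm h20])]; simp
  set Φ : Finset (Sym2 V) → Finset (Sym2 V) := fun N => N ∪ N.image part with hΦdef
  have hΦ_singleton : ∀ f : Sym2 V, Φ {f} = {f, part f} := by
    intro f; rw [hΦdef]; simp [Finset.image_singleton]
  have hmapsto : ∀ N ∈ S1, Φ N ∈ S2 \ {t} := by
    intro N hN
    obtain ⟨hNm, hNc⟩ := hN
    obtain ⟨f, rfl⟩ := Finset.card_eq_one.mp hNc
    have hfE : f ∈ G.edgeSet := hNm.1 (by simp)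
    rw [hΦ_singleton f]
    constructor
    · refine ⟨⟨?_, ?_⟩, ?_⟩
      · intro e he
        simp only [Finset.coe_insert, Finset.coe_singleton, Set.mem_insert_iff,
          Set.mem_singleton_iff] at he
        rcases he with rfl | rfl
        · exact hfE
        · exact hpart_edge f
      · intro x hx y hy hxy
        simp only [Finset.coe_insert, Finset.coe_singleton, Set.mem_insert_iff,
          Set.mem_singleton_iff] at hx hy
        rcases hx with rfl | rfl <;> rcases hy with rfl | rfl
        · exact absurd rfl hxy
        · exact hpart_disj _
        · exact disj_symm' (hpart_disj _)
        · exact absurd rfl hxy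
      · rw [Finset.card_insert_of_notMem (by simp [Ne.symm (hpart_ne f)])]; simp
    · simp only [Set.mem_singleton_iff]
      intro heq
      have hfmem : f ∈ t := heq ▸ (Finset.mem_insert_self f {part f})
      rw [htdef] at hfmem
      simp only [Finset.mem_insert, Finset.mem_singleton] at hfmem
      rcases hfmem with rfl | rfl
      · -- f = e0, part f = e1
        have : part f ∈ t := heq ▸ (by simp : part f ∈ ({f, part f} : Finset (Sym2 V)))
        rw [hp0, htdef] at this
        simp only [Finset.mem_insert, Finset.mem_singleton] at this
        rcases this with h | h
        · exact h10 h
        · exact h21 h.symm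
      · -- f = e2, part f = e3
        have : part f ∈ t := heq ▸ (by simp : part f ∈ ({f, part f} : Finset (Sym2 V)))
        rw [hp2, htdef] at this
        simp only [Finset.mem_insert, Finset.mem_singleton] at this
        rcases this with h | h
        · exact h30 h
        · exact h32 h
  have hinj : Set.InjOn Φ S1 := by
    intro N hN N' hN' heq
    obtain ⟨f, rfl⟩ := Finset.card_eq_one.mp hN.2
    obtain ⟨g, rfl⟩ := Finset.card_eq_one.mp hN'.2
    rw [hΦ_singleton f, hΦ_singleton g] at heq
    by_cases hfg : f = g
    · rw [hfg]
    · have hf : f ∈ ({g, part g} : Finset (Sym2 V)) := heq ▸ (by simp)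
      have hg : g ∈ ({f, part f} : Finset (Sym2 V)) := heq ▸ (by simp)
      simp only [Finset.mem_insert, Finset.mem_singleton] at hf hg
      have hfp : f = part g := hf.resolve_left hfg
      have hgp : g = part f := hg.resolve_left (Ne.symm hfg)
      exfalso
      rcases hpart_mem g with h | h | h | h <;> rw [h] at hfp <;> subst hfp
      · rw [hp0] at hgp; subst hgp; rw [hp1] at h; exact h20 h
      · rw [hp1] at hgp; subst hgp; rw [hp2] at h; exact h31 h
      · rw [hp2] at hgp; subst hgp; rw [hp3] at h; exact h20 h.symm
      · rw [hp3] at hgp; subst hgp; rw [hp0] at h; exact h31 h.symm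
  -- conclude by counting
  have hfin2 : S2.Finite := Set.toFinite _
  have step1 : S1.ncard ≤ (S2 \ {t}).ncard :=
    Set.ncard_le_ncard_of_injOn Φ hmapsto hinj hfin2.diff
  have step2 : (S2 \ {t}).ncard < S2.ncard :=
    Set.ncard_lt_ncard (Set.sdiff_singleton_ssubset.mpr ht2) hfin2
  have : S1.ncard < S2.ncard := lt_of_le_of_lt step1 step2
  simpa [matchCount, hS1, hS2] using this
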